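/- Let X be a path-connected aspherical space with fundamental group G = π₁(X, x₀), and let A, B ≤ G be subgroups such that gAg⁻¹ ∩ B = {1} for every g ∈ G. Let Y_A and Y_B be path-connected aspherical CW complexes with base-point-preserving continuous maps f : Y_A → X and h : Y_B → X inducing injections on fundamental groups with images A and B respectively. Let E = {(p, q, γ) ∈ Y_A × Y_B × C([0,1], X) : γ(0) = f(p), γ(1) = h(q)} with projection π : E → Y_A × Y_B, π(p,q,γ) = (p,q). If U ⊆ Y_A × Y_B is an open set admitting a continuous section s : U → E of π (i.e. π ∘ s is the inclusion of U), then for every continuous map φ₀ : S¹ → U, the composite S¹ → U ↪ Y_A × Y_B is null-homotopic. -/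

import Mathlib

open CategoryTheory Topology
open scoped unitInterval FundamentalGroupoid

attribute [local instance] Path.Homotopic.setoid

noncomputable section CircleAux

/-- The standard parametrization of the circle. -/
def circE : C(I, Circle) :=
  ⟨fun t => Circle.exp (2 * Real.pi * t),
    Circle.exp.continuous.comp (continuous_const.mul continuous_subtype_val)⟩

lemma circE_apply (t : I) : circE t = Circle.exp (2 * Real.pi * t) := rfl

lemma circE_zero : circE 0 = 1 := by
  simp [circE_apply]

lemma circE_one : circE 1 = 1 := by
  simp [circE_apply]

/-- A (non-continuous) section of `circE`. -/
def circR (c : Circle) : I :=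
  if h : 0 ≤ Complex.arg (c : ℂ) then
    ⟨Complex.arg (c : ℂ) / (2 * Real.pi), by
      have hπ := Real.pi_pos
      have h1 := Complex.arg_le_pi (c : ℂ)
      constructor
      · exact div_nonneg h (by positivity)
      · rw [div_le_one (by positivity)]; linarith⟩
  else
    ⟨Complex.arg (c : ℂ) / (2 * Real.pi) + 1, by
      have hπ := Real.pi_pos
      have h2 := Complex.neg_pi_lt_arg (c : ℂ)
      have h3 : Complex.arg (c : ℂ) < 0 := not_le.mp h
      constructor
      · have : (-1 : ℝ) ≤ Complex.arg (c : ℂ) / (2 * Real.pi) := by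
          rw [le_div_iff₀ (by positivity)]; linarith
        linarith
      · have : Complex.arg (c : ℂ) / (2 * Real.pi) ≤ 0 :=
          div_nonpos_iff.mpr (Or.inr ⟨le_of_lt h3, by positivity⟩)
        linarith⟩

lemma circE_circR (c : Circle) : circE (circR c) = c := by
  have hπ := Real.pi_pos
  rw [circE_apply]
  unfold circR
  split_ifs with h
  · show Circle.exp (2 * Real.pi * (Complex.arg (c : ℂ) / (2 * Real.pi))) = c
    rw [show 2 * Real.pi * (Complex.arg (c : ℂ) / (2 * Real.pi)) = Complex.arg (c : ℂ) by
      field_simp]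
    exact Circle.exp_arg c
  · show Circle.exp (2 * Real.pi * (Complex.arg (c : ℂ) / (2 * Real.pi) + 1)) = c
    rw [show 2 * Real.pi * (Complex.arg (c : ℂ) / (2 * Real.pi) + 1)
        = Complex.arg (c : ℂ) + 2 * Real.pi by field_simp]
    rw [Circle.exp_add_two_pi]
    exact Circle.exp_arg c

lemma circE_fiber {t t' : I} (h : circE t = circE t') :
    t = t' ∨ ((t : ℝ) = 0 ∧ (t' : ℝ) = 1) ∨ ((t : ℝ) = 1 ∧ (t' : ℝ) = 0) := by
  have hπ := Real.pi_pos
  obtain ⟨m, hm⟩ := Circle.exp_eq_exp.mp h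
  have ht : (t : ℝ) = (t' : ℝ) + m := by
    have h2 : 2 * Real.pi * (t : ℝ) = 2 * Real.pi * ((t' : ℝ) + m) := by
      rw [hm]; ring
    have := mul_left_cancel₀ (show (2 * Real.pi) ≠ 0 by positivity) h2
    exact this
  have h0t := t.2.1; have h1t := t.2.2
  have h0t' := t'.2.1; have h1t' := t'.2.2
  have hm1 : (-1 : ℤ) ≤ m := by
    have : (-1 : ℝ) ≤ (m : ℤ) := by linarith
    exact_mod_cast this
  have hm2 : m ≤ (1 : ℤ) := by
    have : ((m : ℤ) : ℝ) ≤ 1 := by linarith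
    exact_mod_cast this
  interval_cases m
  · right; left
    push_cast at ht
    constructor <;> linarith
  · left
    ext
    push_cast at ht
    linarith
  · right; right
    push_cast at ht
    constructor <;> linarith

/-- A map from the circle whose associated loop is null-homotopic is null-homotopic. -/
theorem circle_null {Z : Type*} [TopologicalSpace Z] (ψ : C(Circle, Z))
    (γ : Path (ψ 1) (ψ 1)) (hγ : ∀ t, γ t = ψ (circE t))
    (hnull : γ.Homotopic (Path.refl (ψ 1))) :
    ψ.Homotopic (ContinuousMap.const Circle (ψ 1)) := by
  obtain ⟨F⟩ := hnull
  have hends : ∀ s : I, F (s, 0) = F (s, 1) := fun s => by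
    rw [Path.Homotopy.source, Path.Homotopy.target]
  have key : ∀ p : I × I, F (p.1, circR (circE p.2)) = F p := by
    rintro ⟨st, t⟩
    rcases circE_fiber (circE_circR (circE t)) with h | h | h
    · rw [h]
    · rw [show circR (circE t) = (0 : I) from Subtype.ext h.1,
        show t = (1 : I) from Subtype.ext h.2]
      exact hends st
    · rw [show circR (circE t) = (1 : I) from Subtype.ext h.1,
        show t = (0 : I) from Subtype.ext h.2]
      exact (hends st).symm
  have hQ : IsQuotientMap (fun p : I × I => ((p.1, circE p.2) : I × Circle)) := by
    refine IsClosedMap.isQuotientMap ?_ ?_ ?_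
    · exact Continuous.isClosedMap (by continuity)
    · continuity
    · rintro ⟨st, c⟩
      exact ⟨(st, circR c), by simp [circE_circR]⟩
  have hcont : Continuous (fun p : I × Circle => F (p.1, circR p.2)) := by
    rw [hQ.continuous_iff]
    convert F.continuous using 1
    funext p
    exact key p
  refine ⟨⟨⟨fun p => F (p.1, circR p.2), hcont⟩, ?_, ?_⟩⟩
  · intro c
    show F (0, circR c) = ψ c
    rw [F.apply_zero]
    show γ (circR c) = ψ c
    rw [hγ, circE_circR]
  · intro c
    show F (1, circR c) = ψ 1
    rw [F.apply_one]
    rfl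

end CircleAux

/-- `X` is (homeomorphic to the geometric realization of) a CW complex. -/
def IsCWComplex (X : Type) [TopologicalSpace X] : Prop :=
  ∃ C : TopCat.{0}, Nonempty (TopCat.CWComplex C) ∧ Nonempty (C ≃ₜ X)

/-- A space is aspherical if all homotopy groups `π_n` for `n ≥ 2` are trivial. -/
def Aspherical (X : Type*) [TopologicalSpace X] : Prop :=
  ∀ n : ℕ, 2 ≤ n → ∀ x : X, Subsingleton (HomotopyGroup (Fin n) X x)

/-- The homomorphism `π₁(Y, y) → π₁(X, x)` induced by a continuous map `f : Y → X` with
`f y = x`. -/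
noncomputable def π₁Map {Y X : Type} [TopologicalSpace Y] [TopologicalSpace X]
    (f : C(Y, X)) (y : Y) (x : X) (hf : f y = x) :
    FundamentalGroup Y y →* FundamentalGroup X x :=
  let F : FundamentalGroupoid Y ⥤ FundamentalGroupoid X :=
    πₘ (show TopCat.of Y ⟶ TopCat.of X from TopCat.ofHom f)
  (((eqToIso (show F.obj ⟨y⟩ = (⟨x⟩ : FundamentalGroupoid X) by
      subst hf; rfl)).conj).toMonoidHom).comp (F.mapEnd ⟨y⟩)

theorem stmt_17 (X : Type) [TopologicalSpace X] [PathConnectedSpace X]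
    (hasphX : Aspherical X) (x₀ : X)
    (A B : Subgroup (FundamentalGroup X x₀))
    (hAB : ∀ g : FundamentalGroup X x₀,
      Subgroup.map (MulAut.conj g).toMonoidHom A ⊓ B = ⊥)
    (YA YB : Type) [TopologicalSpace YA] [TopologicalSpace YB]
    [PathConnectedSpace YA] [PathConnectedSpace YB]
    (hCWA : IsCWComplex YA) (hCWB : IsCWComplex YB)
    (hasphA : Aspherical YA) (hasphB : Aspherical YB)
    (yA : YA) (yB : YB) (f : C(YA, X)) (h : C(YB, X))
    (hf : f yA = x₀) (hh : h yB = x₀)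
    (hfinj : Function.Injective (π₁Map f yA x₀ hf))
    (hfrange : (π₁Map f yA x₀ hf).range = A)
    (hhinj : Function.Injective (π₁Map h yB x₀ hh))
    (hhrange : (π₁Map h yB x₀ hh).range = B)
    (U : Set (YA × YB)) (hU : IsOpen U)
    (s : C(U, {e : (YA × YB) × C(I, X) // e.2 0 = f e.1.1 ∧ e.2 1 = h e.1.2}))
    (hs : ∀ u : U, ((s u : (YA × YB) × C(I, X))).1 = (u : YA × YB))
    (φ₀ : C(Circle, U)) :
    ∃ c : YA × YB, ((⟨Subtype.val, continuous_subtype_val⟩ : C(U, YA × YB)).comp φ₀).Homotopic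
      (ContinuousMap.const Circle c) := by
  classical
  let f' : TopCat.of YA ⟶ TopCat.of X := TopCat.ofHom f
  let h' : TopCat.of YB ⟶ TopCat.of X := TopCat.ofHom h
  let u₀ : U := φ₀ 1
  let p₀ : YA := (u₀ : YA × YB).1
  let q₀ : YB := (u₀ : YA × YB).2
  -- the loop in `U` given by `φ₀`
  let ω : Path u₀ u₀ :=
    { toFun := fun t => φ₀ (circE t)
      continuous_toFun := φ₀.continuous.comp circE.continuous
      source' := by show φ₀ (circE 0) = u₀; rw [circE_zero]
      target' := by show φ₀ (circE 1) = u₀; rw [circE_one] }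
  let prA : C(U, YA) := ⟨fun u => (u : YA × YB).1, continuous_fst.comp continuous_subtype_val⟩
  let prB : C(U, YB) := ⟨fun u => (u : YA × YB).2, continuous_snd.comp continuous_subtype_val⟩
  let α : Path p₀ p₀ := ω.map prA.continuous
  let β : Path q₀ q₀ := ω.map prB.continuous
  let αq : FundamentalGroupoid.mk p₀ ⟶ FundamentalGroupoid.mk p₀ := ⟦α⟧
  let βq : FundamentalGroupoid.mk q₀ ⟶ FundamentalGroupoid.mk q₀ := ⟦β⟧
  let FA : C(↥U, X) := f.comp prA
  let FB : C(↥U, X) := h.comp prB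
  -- the homotopy between `FA` and `FB` coming from the section `s`
  let Γ : ContinuousMap.Homotopy FA FB :=
  { toFun := fun p => ((s p.2 : (YA × YB) × C(I, X)).2) p.1
    continuous_toFun := by
      refine continuous_eval.comp (Continuous.prodMk ?_ continuous_fst)
      exact (continuous_snd.comp continuous_subtype_val).comp (s.continuous.comp continuous_snd)
    map_zero_left := fun u => by
      have h1 := (s u).prop.1
      show ((s u : (YA × YB) × C(I, X)).2) 0 = FA u
      rw [h1, hs u]
      rfl
    map_one_left := fun u => by
      have h1 := (s u).prop.2
      show ((s u : (YA × YB) × C(I, X)).2) 1 = FB u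
      rw [h1, hs u]
      rfl }
  let η := FundamentalGroupoidFunctor.homotopicMapsNatIso Γ
  let q : (FundamentalGroupoid.map f).obj ⟨p₀⟩ ⟶ (FundamentalGroupoid.map h).obj ⟨q₀⟩ := η.app ⟨u₀⟩
  let ωq : (⟨u₀⟩ : FundamentalGroupoid ↥U) ⟶ ⟨u₀⟩ := ⟦ω⟧
  have nat : (FundamentalGroupoid.map f).map αq ≫ q = q ≫ (FundamentalGroupoid.map h).map βq := η.naturality ωq
  have hfα : (FundamentalGroupoid.map f).map αq = q ≫ (FundamentalGroupoid.map h).map βq ≫ Groupoid.inv q := by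
    rw [← Category.assoc, ← nat, Category.assoc, Groupoid.comp_inv, Category.comp_id]
  -- basepoint changes
  have hxA : (FundamentalGroupoid.map f).obj ⟨yA⟩ = (⟨x₀⟩ : FundamentalGroupoid X) := by
    rw [show (FundamentalGroupoid.map f).obj ⟨yA⟩ = ⟨f yA⟩ from rfl, hf]
  have hxB : (FundamentalGroupoid.map h).obj ⟨yB⟩ = (⟨x₀⟩ : FundamentalGroupoid X) := by
    rw [show (FundamentalGroupoid.map h).obj ⟨yB⟩ = ⟨h yB⟩ from rfl, hh]
  let iA := eqToIso hxA
  let iB := eqToIso hxB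
  let PA : Path yA p₀ := PathConnectedSpace.somePath yA p₀
  let PB : Path yB q₀ := PathConnectedSpace.somePath yB q₀
  let PAq : FundamentalGroupoid.mk yA ⟶ FundamentalGroupoid.mk p₀ := ⟦PA⟧
  let PBq : FundamentalGroupoid.mk yB ⟶ FundamentalGroupoid.mk q₀ := ⟦PB⟧
  let hA : FundamentalGroupoid.mk yA ⟶ FundamentalGroupoid.mk yA :=
    PAq ≫ (αq ≫ Groupoid.inv PAq)
  let hB : FundamentalGroupoid.mk yB ⟶ FundamentalGroupoid.mk yB :=
    PBq ≫ (βq ≫ Groupoid.inv PBq)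
  let gA : FundamentalGroup YA yA := FundamentalGroup.fromArrow (X := TopCat.of YA) hA
  let gB : FundamentalGroup YB yB := FundamentalGroup.fromArrow (X := TopCat.of YB) hB
  let a : FundamentalGroup X x₀ := π₁Map f yA x₀ hf gA
  let b : FundamentalGroup X x₀ := π₁Map h yB x₀ hh gB
  let Ghom : (⟨x₀⟩ : FundamentalGroupoid X) ⟶ ⟨x₀⟩ :=
    iA.inv ≫ (FundamentalGroupoid.map f).map PAq ≫ q ≫ Groupoid.inv ((FundamentalGroupoid.map h).map PBq) ≫ iB.hom
  let g : FundamentalGroup X x₀ := FundamentalGroup.fromArrow (X := TopCat.of X) Ghom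
  -- the key conjugation relation
  have hab : a = g⁻¹ * b * g := by
    refine End.ext ?_
    show iA.inv ≫ (FundamentalGroupoid.map f).map hA ≫ iA.hom
        = Ghom ≫ (iB.inv ≫ (FundamentalGroupoid.map h).map hB ≫ iB.hom) ≫ Groupoid.inv Ghom
    show iA.inv ≫ (FundamentalGroupoid.map f).map (PAq ≫ (αq ≫ Groupoid.inv PAq)) ≫ iA.hom
        = Ghom ≫ (iB.inv ≫ (FundamentalGroupoid.map h).map (PBq ≫ (βq ≫ Groupoid.inv PBq)) ≫ iB.hom)
            ≫ Groupoid.inv Ghom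
    rw [Functor.map_comp, Functor.map_comp, Functor.map_comp, Functor.map_comp]
    rw [hfα]
    simp only [Ghom, Groupoid.inv_eq_inv, Functor.map_inv, IsIso.inv_comp, IsIso.Iso.inv_inv,
      IsIso.Iso.inv_hom, IsIso.inv_inv, Category.assoc,
      Iso.hom_inv_id_assoc, Iso.inv_hom_id_assoc, IsIso.inv_hom_id_assoc,
      IsIso.hom_inv_id_assoc, Category.comp_id, Category.id_comp]
  -- group-theoretic conclusion
  have haA : a ∈ A := by
    rw [← hfrange]
    exact ⟨gA, rfl⟩
  have hbB : b ∈ B := by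
    rw [← hhrange]
    exact ⟨gB, rfl⟩
  have hb_mem : b ∈ Subgroup.map (MulAut.conj g).toMonoidHom A ⊓ B := by
    refine ⟨Subgroup.mem_map.mpr ⟨a, haA, ?_⟩, hbB⟩
    show g * a * g⁻¹ = b
    rw [hab]
    group
  have hb1 : b = 1 := by
    have h1 := hAB g ▸ hb_mem
    simpa [Subgroup.mem_bot] using h1
  have ha1 : a = 1 := by
    rw [hab, hb1]
    group
  have hgA1 : gA = 1 := hfinj (by rw [map_one]; exact ha1)
  have hgB1 : gB = 1 := hhinj (by rw [map_one]; exact hb1)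
  -- extract null-homotopy of the component loops
  have hαid : αq = (⟦Path.refl p₀⟧ : FundamentalGroupoid.mk p₀ ⟶ FundamentalGroupoid.mk p₀) := by
    have h1 : hA = 𝟙 (FundamentalGroupoid.mk yA) :=
      congrArg (FundamentalGroup.toArrow (X := TopCat.of YA)) hgA1
    have h2 := congrArg (fun z => Groupoid.inv PAq ≫ z ≫ PAq) h1
    simp only [hA, Groupoid.inv_eq_inv, Category.assoc, IsIso.inv_hom_id,
      Category.comp_id, IsIso.inv_hom_id_assoc, Category.id_comp] at h2
    rw [h2]
    rfl
  have hβid : βq = (⟦Path.refl q₀⟧ : FundamentalGroupoid.mk q₀ ⟶ FundamentalGroupoid.mk q₀) := by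
    have h1 : hB = 𝟙 (FundamentalGroupoid.mk yB) :=
      congrArg (FundamentalGroup.toArrow (X := TopCat.of YB)) hgB1
    have h2 := congrArg (fun z => Groupoid.inv PBq ≫ z ≫ PBq) h1
    simp only [hB, Groupoid.inv_eq_inv, Category.assoc, IsIso.inv_hom_id,
      Category.comp_id, IsIso.inv_hom_id_assoc, Category.id_comp] at h2
    rw [h2]
    rfl
  have hαhtp : α.Homotopic (Path.refl p₀) := Quotient.exact hαid
  have hβhtp : β.Homotopic (Path.refl q₀) := Quotient.exact hβid
  -- conclude using the circle lemma
  let ψA : C(Circle, YA) := prA.comp φ₀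
  let ψB : C(Circle, YB) := prB.comp φ₀
  have HA : ψA.Homotopic (ContinuousMap.const Circle (ψA 1)) :=
    circle_null ψA (show Path (ψA 1) (ψA 1) from α) (fun t => rfl) hαhtp
  have HB : ψB.Homotopic (ContinuousMap.const Circle (ψB 1)) :=
    circle_null ψB (show Path (ψB 1) (ψB 1) from β) (fun t => rfl) hβhtp
  refine ⟨(p₀, q₀), ?_⟩
  obtain ⟨GA⟩ := HA
  obtain ⟨GB⟩ := HB
  have hrw : (⟨Subtype.val, continuous_subtype_val⟩ : C(U, YA × YB)).comp φ₀
      = ψA.prodMk ψB := ContinuousMap.ext fun c => rfl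
  rw [hrw]
  exact ⟨GA.prod GB⟩
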